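/- Let A, V : ℝ² → ℝ and let (x,t) ∈ ℝ² be a point at which A and V are differentiable, A(x,t) > 0, and the blood flow PDEs hold pointwise: A_t = −A_x V − A V_x and V_t = −V V_x − (β/(2ρA₀√A)) A_x − K_r V/A. Then the function v(x,t) = V(x,t) − 2√(2β/(ρA₀))·A(x,t)^(1/4) is differentiable at (x,t) and satisfies v_t = −λ₂·v_x − K_r·V/A at (x,t), where λ₂ = V(x,t) − √(β/(2ρA₀))·A(x,t)^(1/4). -/

import Mathlib

/-- If `A`, `V` are differentiable at a point where the 1-D blood flow PDEs hold
pointwise and `A > 0`, then the Riemann invariant `v = V − 2√(2β/(ρA₀))·A^(1/4)` is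
differentiable there and satisfies `v_t = −λ₂·v_x − K_r·V/A`. -/
theorem riemann_v_transport (β ρ A₀ Kr : ℝ)
    (hβ : 0 < β) (hρ : 0 < ρ) (hA₀ : 0 < A₀) (hKr : 0 < Kr)
    (A V : ℝ × ℝ → ℝ) (p : ℝ × ℝ)
    (hAdiff : DifferentiableAt ℝ A p) (hVdiff : DifferentiableAt ℝ V p)
    (hApos : 0 < A p)
    (hpde1 : fderiv ℝ A p (0, 1) =
      -(fderiv ℝ A p (1, 0)) * V p - A p * fderiv ℝ V p (1, 0))
    (hpde2 : fderiv ℝ V p (0, 1) =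
      -(V p) * fderiv ℝ V p (1, 0)
        - (β / (2 * ρ * A₀ * Real.sqrt (A p))) * fderiv ℝ A p (1, 0)
        - Kr * V p / A p) :
    DifferentiableAt ℝ
      (fun q => V q - 2 * Real.sqrt (2 * β / (ρ * A₀)) * A q ^ ((1 : ℝ) / 4)) p ∧
    fderiv ℝ (fun q => V q - 2 * Real.sqrt (2 * β / (ρ * A₀)) * A q ^ ((1 : ℝ) / 4)) p (0, 1)
      = -(V p - Real.sqrt (β / (2 * ρ * A₀)) * A p ^ ((1 : ℝ) / 4)) *
          fderiv ℝ (fun q => V q - 2 * Real.sqrt (2 * β / (ρ * A₀)) * A q ^ ((1 : ℝ) / 4))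
            p (1, 0)
        - Kr * V p / A p := by
  have ha1pos : (0:ℝ) < A p ^ ((1:ℝ)/4) := Real.rpow_pos_of_pos hApos _
  have ha4 : (A p ^ ((1:ℝ)/4)) ^ (4:ℕ) = A p := by
    rw [← Real.rpow_natCast (A p ^ ((1:ℝ)/4)) 4, ← Real.rpow_mul hApos.le]
    norm_num
  have hsq : Real.sqrt (A p) = (A p ^ ((1:ℝ)/4)) ^ (2:ℕ) := by
    rw [← Real.rpow_natCast (A p ^ ((1:ℝ)/4)) 2, ← Real.rpow_mul hApos.le,
      Real.sqrt_eq_rpow]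
    norm_num
  have hspos : 0 < Real.sqrt (β / (2 * ρ * A₀)) := Real.sqrt_pos.2 (by positivity)
  have hs2 : Real.sqrt (β / (2 * ρ * A₀)) ^ 2 = β / (2 * ρ * A₀) :=
    Real.sq_sqrt (by positivity)
  have hc : Real.sqrt (2 * β / (ρ * A₀)) = 2 * Real.sqrt (β / (2 * ρ * A₀)) := by
    have h2 : 2 * β / (ρ * A₀) = (2 * Real.sqrt (β / (2 * ρ * A₀))) ^ 2 := by
      rw [mul_pow, hs2]; field_simp
    rw [h2, Real.sqrt_sq (by positivity)]
  have hpow : A p ^ ((1:ℝ)/4 - 1) = A p ^ ((1:ℝ)/4) / A p := by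
    rw [Real.rpow_sub hApos, Real.rpow_one]
  have hA' := hAdiff.hasFDerivAt
  have hV' := hVdiff.hasFDerivAt
  have hr : HasFDerivAt (fun q => A q ^ ((1:ℝ)/4))
      (((1:ℝ)/4 * A p ^ ((1:ℝ)/4 - 1)) • fderiv ℝ A p) p :=
    hA'.rpow_const (Or.inl hApos.ne')
  have hv : HasFDerivAt
      (fun q => V q - 2 * Real.sqrt (2 * β / (ρ * A₀)) * A q ^ ((1:ℝ)/4))
      (fderiv ℝ V p - (2 * Real.sqrt (2 * β / (ρ * A₀))) •
        (((1:ℝ)/4 * A p ^ ((1:ℝ)/4 - 1)) • fderiv ℝ A p)) p :=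
    hV'.sub (hr.const_mul _)
  refine ⟨hv.differentiableAt, ?_⟩
  rw [hv.fderiv]
  simp only [ContinuousLinearMap.sub_apply, ContinuousLinearMap.smul_apply,
    smul_eq_mul, hpde1, hpde2, hc, hpow, hsq]
  set a1 := A p ^ ((1:ℝ)/4)
  set s := Real.sqrt (β / (2 * ρ * A₀))
  have hb : β = s ^ 2 * (2 * ρ * A₀) := by rw [hs2]; field_simp
  rw [← ha4, hb]
  field_simp
  ring
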